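/- In the concurrent graph sharing game without the distinct-subset-sums assumption, where ties (both players having equal collected weight) are resolved by a fixed arbitrary tie-breaking rule determining which player takes the next vertex, the first player can still guarantee to take vertices of total weight at least 1/3 on every instance (G,w). -/

import Mathlib

/-!
The concurrent graph sharing game **without** the distinct-subset-sums
assumption.  Histories are lists of the taken vertices, most recent first.
The player to move at a history is determined as follows: at the empty history
1st moves (1st begins by taking any vertex); afterwards the player with the
strictly smaller collected weight moves, and if both players' collected weights
are equal, a fixed arbitrary tie-breaking rule `tb` (a function of the history,
returning `true` iff 1st is to move) decides.
-/

namespace ConcurrentSharingTB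

variable {V : Type} [Fintype V]

/-- The pair `(w(F), w(S))` of weights collected by the two players along a
history (most recent vertex first), under the tie-breaking rule `tb`:
each vertex is assigned to the player who was to move, namely 1st iff his
collected weight was strictly smaller, or the history was empty, or on a tie
the rule `tb` selected 1st. -/
noncomputable def scores (w : V → ℝ) (tb : List V → Bool) : List V → ℝ × ℝ
  | [] => (0, 0)
  | v :: h =>
    let p := scores w tb h
    if p.1 < p.2 ∨ (p.1 = p.2 ∧ (h.isEmpty || tb h) = true) then
      (p.1 + w v, p.2)
    else
      (p.1, p.2 + w v)

/-- `v` is a legal next move at history `h`: it is not yet taken, and it is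
adjacent to some taken vertex (any vertex is legal at the start). -/
def LegalMove (G : SimpleGraph V) (h : List V) (v : V) : Prop :=
  v ∉ h ∧ (h = [] ∨ ∃ u ∈ h, G.Adj u v)

/-- A strategy (for either player) maps histories to vertices; it is legal if
it produces a legal move whenever a legal move exists. -/
def LegalStrategy (G : SimpleGraph V) (σ : List V → V) : Prop :=
  ∀ h : List V, (∃ v, LegalMove G h v) → LegalMove G h (σ h)

/-- The history after `n` rounds when 1st plays `σ` and 2nd plays `τ`, under
the tie-breaking rule `tb`. -/
noncomputable def playAux (w : V → ℝ) (tb : List V → Bool)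
    (σ τ : List V → V) : ℕ → List V
  | 0 => []
  | n + 1 =>
    let h := playAux w tb σ τ n
    (if (scores w tb h).1 < (scores w tb h).2 ∨
        ((scores w tb h).1 = (scores w tb h).2 ∧ (h.isEmpty || tb h) = true)
     then σ h else τ h) :: h

/-- The total weight `w(F)` collected by 1st at the end of the complete play
(all vertices taken) in which 1st plays `σ` and 2nd plays `τ`, under the
tie-breaking rule `tb`. -/
noncomputable def firstScore (w : V → ℝ) (tb : List V → Bool)
    (σ τ : List V → V) : ℝ :=
  (scores w tb (playAux w tb σ τ (Fintype.card V))).1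

end ConcurrentSharingTB

namespace ConcurrentSharingTB

variable {V : Type} [Fintype V]

set_option linter.unusedSectionVars false

lemma scores_sum (w : V → ℝ) (tb : List V → Bool) :
    ∀ h : List V, (scores w tb h).1 + (scores w tb h).2 = (h.map w).sum
  | [] => by simp [scores]
  | v :: h => by
    have := scores_sum w tb h
    simp only [scores, List.map_cons, List.sum_cons]
    split <;> simp <;> linarith

lemma scores_cons_fst_le (w : V → ℝ) (tb : List V → Bool)
    (hw : ∀ v, 0 ≤ w v) (v : V) (h : List V) :
    (scores w tb h).1 ≤ (scores w tb (v :: h)).1 := by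
  simp only [scores]
  split
  · simpa using hw v
  · exact le_refl _

lemma walk_cross {G : SimpleGraph V} (h : List V) :
    ∀ {a b : V}, G.Walk a b → a ∈ h → b ∉ h →
      ∃ v, v ∉ h ∧ ∃ u ∈ h, G.Adj u v := by
  intro a b p
  induction p with
  | nil => exact fun ha hb => absurd ha hb
  | @cons a c b adj p ih =>
    intro ha hb
    by_cases hc : c ∈ h
    · exact ih hc hb
    · exact ⟨c, hc, a, ha, adj⟩

lemma exists_legal {G : SimpleGraph V} (hconn : G.Connected)
    (h : List V) (hx : ∃ v, v ∉ h) : ∃ v, LegalMove G h v := by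
  obtain ⟨x, hxh⟩ := hx
  cases h with
  | nil => exact ⟨x, hxh, Or.inl rfl⟩
  | cons u t =>
    obtain ⟨p⟩ := hconn.preconnected u x
    obtain ⟨v, hv, u', hu', hadj⟩ :=
      walk_cross (u :: t) p List.mem_cons_self hxh
    exact ⟨v, hv, Or.inr ⟨u', hu', hadj⟩⟩

end ConcurrentSharingTB

open ConcurrentSharingTB in
/-- In the concurrent graph sharing game without the
distinct-subset-sums assumption, where ties are resolved by a fixed arbitrary
tie-breaking rule `tb`, the first player can still guarantee to take vertices
of total weight at least `1/3` on every instance `(G,w)` (a finite connected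
graph with weights in `(0,1]` summing to `1`). -/
theorem first_player_guarantees_one_third_ties {V : Type} [Fintype V]
    (G : SimpleGraph V) (w : V → ℝ) (tb : List V → Bool)
    (hconn : G.Connected) (hw : ∀ v : V, 0 < w v ∧ w v ≤ 1)
    (hsum : (∑ v : V, w v) = 1) :
    ∃ σ : List V → V, LegalStrategy G σ ∧
      ∀ τ : List V → V, LegalStrategy G τ →
        1 / 3 ≤ firstScore w tb σ τ := by
  classical
  haveI : Nonempty V := hconn.nonempty
  have hw0 : ∀ v, 0 ≤ w v := fun v => (hw v).1.le
  obtain ⟨vmax, hvmax⟩ := Finite.exists_max w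
  set σ : List V → V := fun h =>
    if h = [] then vmax else
      if hl : ∃ v, LegalMove G h v then hl.choose else vmax with hσdef
  have hσleg : LegalStrategy G σ := by
    intro h hl
    by_cases hh : h = []
    · subst hh
      show LegalMove G [] (σ [])
      have : σ [] = vmax := by simp [hσdef]
      rw [this]
      exact ⟨by simp, Or.inl rfl⟩
    · have : σ h = hl.choose := by simp [hσdef, hh, hl]
      rw [this]
      exact hl.choose_spec
  refine ⟨σ, hσleg, ?_⟩
  intro τ hτ
  set N := Fintype.card V with hN
  set H : ℕ → List V := playAux w tb σ τ with hH
  have hstep : ∀ n, H (n + 1) =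
      (if (scores w tb (H n)).1 < (scores w tb (H n)).2 ∨
          ((scores w tb (H n)).1 = (scores w tb (H n)).2 ∧
            ((H n).isEmpty || tb (H n)) = true)
       then σ (H n) else τ (H n)) :: H n := fun n => rfl
  -- nodup and length
  have key : ∀ n, n ≤ N → (H n).Nodup ∧ (H n).length = n := by
    intro n
    induction n with
    | zero => intro _; simp [hH, playAux]
    | succ n ih =>
      intro hn
      obtain ⟨hnd, hlen⟩ := ih (Nat.le_of_succ_le hn)
      have hex : ∃ v, v ∉ H n := by
        by_contra hall
        push_neg at hall
        have hsub : (Finset.univ : Finset V) ⊆ (H n).toFinset := by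
          intro v _; simpa using hall v
        have := Finset.card_le_card hsub
        rw [List.toFinset_card_of_nodup hnd, hlen, Finset.card_univ, ← hN] at this
        omega
      have hlegal := exists_legal hconn (H n) hex
      have hmove : LegalMove G (H n)
          (if (scores w tb (H n)).1 < (scores w tb (H n)).2 ∨
              ((scores w tb (H n)).1 = (scores w tb (H n)).2 ∧
                ((H n).isEmpty || tb (H n)) = true)
           then σ (H n) else τ (H n)) := by
        split
        · exact hσleg _ hlegal
        · exact hτ _ hlegal
      rw [hstep n]
      exact ⟨List.nodup_cons.mpr ⟨hmove.1, hnd⟩, by simp [hlen]⟩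
  obtain ⟨hnd, hlen⟩ := key N le_rfl
  -- total weight is 1 at the end
  have htf : (H N).toFinset = Finset.univ :=
    Finset.eq_univ_of_card _ (by rw [List.toFinset_card_of_nodup hnd, hlen])
  have hsum1 : ((H N).map w).sum = 1 := by
    rw [← List.sum_toFinset w hnd, htf]
    exact hsum
  have htot : (scores w tb (H N)).1 + (scores w tb (H N)).2 = 1 := by
    rw [scores_sum]; exact hsum1
  -- monotonicity of player 1's score
  have hmono : Monotone fun n => (scores w tb (H n)).1 := by
    apply monotone_nat_of_le_succ
    intro n
    rw [hstep n]
    exact scores_cons_fst_le w tb hw0 _ _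
  -- first move is vmax
  have h1 : H 1 = [vmax] := by
    have h0 : H 0 = [] := rfl
    rw [hstep 0, h0]
    have hc : (scores w tb ([] : List V)).1 < (scores w tb ([] : List V)).2 ∨
        ((scores w tb ([] : List V)).1 = (scores w tb ([] : List V)).2 ∧
          (([] : List V).isEmpty || tb []) = true) := by
      right
      exact ⟨rfl, by simp⟩
    rw [if_pos hc]
    simp [hσdef]
  have hs1 : w vmax ≤ (scores w tb (H N)).1 := by
    have hN1 : 1 ≤ N := Fintype.card_pos
    have := hmono hN1
    simp only at this
    calc w vmax = (scores w tb (H 1)).1 := by rw [h1]; simp [scores]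
    _ ≤ (scores w tb (H N)).1 := this
  -- invariant: second player's score ≤ first's + max weight
  have hinv : ∀ n, (scores w tb (H n)).2 ≤ (scores w tb (H n)).1 + w vmax := by
    intro n
    induction n with
    | zero =>
      have h0 : H 0 = [] := rfl
      rw [h0]; simp [scores]; exact hw0 vmax
    | succ n ih =>
      rw [hstep n]
      simp only [scores]
      split
      · have : 0 ≤ w (σ (H n)) := hw0 _
        dsimp only
        linarith
      · rename_i hc
        push_neg at hc
        have h21 : (scores w tb (H n)).2 ≤ (scores w tb (H n)).1 := hc.1
        have := hvmax (τ (H n))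
        dsimp only
        linarith
  have hfin := hinv N
  have hfs : firstScore w tb σ τ = (scores w tb (H N)).1 := rfl
  rw [hfs]
  linarith
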